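/- Let X be a complex manifold, W ⊂ X a closed analytic subset, and suppose every non-constant entire curve f : C → X has image contained in W. If π : X → X₀ is a proper modification that is an isomorphism over X₀ ∖ π(W) and X₀ ∖ π(W) contains no non-constant entire curves, then d_X ≥ π*(d_{X₀}); in particular, if d_{X₀} is a distance on X₀, then d_X is a distance on X ∖ W. -/

import Mathlib

/-!
Kobayashi pseudodistance, defined via chains of holomorphic discs. A "complex space"
is modelled abstractly as a topological space `X` together with a predicate
`Holo : (𝔻 → X) → Prop` singling out the holomorphic maps from the unit disc.
-/

open scoped ENNReal

/-- The Poincaré distance between two points of the unit disc (as an extended real). -/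
noncomputable def poincareDist (a b : Complex.UnitDisc) : ℝ≥0∞ :=
  ENNReal.ofReal
    (Real.log ((1 + ‖(((a : ℂ) - (b : ℂ)) / (1 - (starRingEnd ℂ) (a : ℂ) * (b : ℂ)))‖) /
      (1 - ‖(((a : ℂ) - (b : ℂ)) / (1 - (starRingEnd ℂ) (a : ℂ) * (b : ℂ)))‖)))

/-- A Kobayashi chain of holomorphic discs joining `p` to `q` in `X`. -/
structure KobayashiChain {X : Type*} (Holo : (Complex.UnitDisc → X) → Prop) (p q : X) where
  n : ℕ
  f : Fin (n + 1) → Complex.UnitDisc → X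
  a : Fin (n + 1) → Complex.UnitDisc
  b : Fin (n + 1) → Complex.UnitDisc
  holo : ∀ i, Holo (f i)
  source : f 0 (a 0) = p
  target : f (Fin.last n) (b (Fin.last n)) = q
  link : ∀ i : Fin n, f i.castSucc (b i.castSucc) = f i.succ (a i.succ)

/-- The length of a Kobayashi chain: the sum of the Poincaré distances. -/
noncomputable def KobayashiChain.length {X : Type*} {Holo : (Complex.UnitDisc → X) → Prop}
    {p q : X} (c : KobayashiChain Holo p q) : ℝ≥0∞ :=
  ∑ i, poincareDist (c.a i) (c.b i)

/-- The Kobayashi pseudodistance of `X`: the infimum of lengths of chains of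
holomorphic discs joining `p` to `q`. -/
noncomputable def kobayashiDist {X : Type*} (Holo : (Complex.UnitDisc → X) → Prop) (p q : X) :
    ℝ≥0∞ :=
  ⨅ c : KobayashiChain Holo p q, c.length


/-- Let `π : X → X₀` be a proper modification such that every
non-constant entire curve of `X` lies in the closed analytic subset `W`, `π` is an
isomorphism off `W`, and `X₀ ∖ π(W)` contains no non-constant entire curves. Then
`d_X ≥ π^*(d_{X₀})`; in particular, if `d_{X₀}` is a distance, then `d_X` is a distance
on `X ∖ W`. -/
theorem kobayashi_distance_off_exceptional {X X₀ : Type*}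
    [TopologicalSpace X] [TopologicalSpace X₀]
    (W : Set X) (hWclosed : IsClosed W)
    (HoloX : (Complex.UnitDisc → X) → Prop) (HoloX₀ : (Complex.UnitDisc → X₀) → Prop)
    (EntireX : (ℂ → X) → Prop) (EntireX₀ : (ℂ → X₀) → Prop)
    (π : X → X₀) (hπcont : Continuous π)
    (hπholo : ∀ g : Complex.UnitDisc → X, HoloX g → HoloX₀ (π ∘ g))
    (hcurves : ∀ f : ℂ → X, EntireX f → ¬ (∃ c, f = fun _ => c) → Set.range f ⊆ W)
    (hmod : Set.InjOn π Wᶜ)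
    (h₀curves : ∀ f : ℂ → X₀, EntireX₀ f → ¬ (∃ c, f = fun _ => c) →
      ¬ Set.range f ⊆ (π '' W)ᶜ) :
    (∀ p q : X, kobayashiDist HoloX₀ (π p) (π q) ≤ kobayashiDist HoloX p q) ∧
    ((∀ p q : X₀, p ≠ q → 0 < kobayashiDist HoloX₀ p q) →
      ∀ p ∈ Wᶜ, ∀ q ∈ Wᶜ, p ≠ q → 0 < kobayashiDist HoloX p q) := by
  have hle : ∀ p q : X, kobayashiDist HoloX₀ (π p) (π q) ≤ kobayashiDist HoloX p q := by
    intro p q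
    refine le_iInf fun c => ?_
    have : kobayashiDist HoloX₀ (π p) (π q) ≤
        (KobayashiChain.mk c.n (fun i => π ∘ c.f i) c.a c.b
          (fun i => hπholo _ (c.holo i))
          (by simp [Function.comp, c.source])
          (by simp [Function.comp, c.target])
          (fun i => by simp [Function.comp, c.link i]) :
          KobayashiChain HoloX₀ (π p) (π q)).length :=
      iInf_le _ _
    simpa [KobayashiChain.length] using this
  refine ⟨hle, fun hdist p hp q hq hpq => ?_⟩
  have hne : π p ≠ π q := fun h => hpq (hmod hp hq h)
  exact lt_of_lt_of_le (hdist _ _ hne) (hle p q)
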